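/- Let S_1,...,S_N be a sequence over a field F, let {g_1 = (g_11, g_12), g_2 = (g_21, g_22)} be a minimal Gröbner basis (top ordering) of the row space M of [[x^{N+1}, 0], [−(S_N x^N + ... + S_1 x), 1]] with g_12(0) = 0 and g_22(0) ≠ 0, and set L̃ = deg g_1, L = deg g_2. Then L is the shortest length of a feedback polynomial for S_1,...,S_N, g_22 is a shortest feedback polynomial, and the set of all shortest feedback polynomials is exactly {a·g_22 + b·g_12 : 0 ≠ a ∈ F, b ∈ F[x], deg b ≤ L − L̃}. -/

import Mathlib

open Polynomial

open scoped Classical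

/-- Support of a polynomial vector: monomials `(degree, position)` ordered lexicographically,
which is the term-over-position (top) ordering. -/
noncomputable def vsupp {R : Type*} [CommRing R] {q : ℕ} (f : Fin q → R[X]) :
    Finset (Lex (ℕ × Fin q)) :=
  Finset.univ.biUnion fun i => (f i).support.image fun α => toLex (α, i)

/-- Leading monomial w.r.t. the top ordering (`⊥` for the zero vector). -/
noncomputable def vlm {R : Type*} [CommRing R] {q : ℕ} (f : Fin q → R[X]) :
    WithBot (Lex (ℕ × Fin q)) := (vsupp f).max

/-- Degree of the leading monomial (junk value `0` for the zero vector). -/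
noncomputable def vdeg {R : Type*} [CommRing R] {q : ℕ} (f : Fin q → R[X]) : ℕ :=
  WithBot.unbotD 0 ((vlm f).map fun m => (ofLex m).1)

/-- Leading position. -/
noncomputable def vlpos {R : Type*} [CommRing R] {q : ℕ} (f : Fin q → R[X]) : WithBot (Fin q) :=
  (vlm f).map fun m => (ofLex m).2

/-- Leading coefficient. -/
noncomputable def vlc {R : Type*} [CommRing R] {q : ℕ} (f : Fin q → R[X]) : R :=
  WithBot.unbotD 0 ((vlm f).map fun m => (f (ofLex m).2).coeff (ofLex m).1)

/-- Leading term of a polynomial vector, as a polynomial vector. -/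
noncomputable def vlt {R : Type*} [CommRing R] {q : ℕ} (f : Fin q → R[X]) : Fin q → R[X] :=
  WithBot.unbotD 0 ((vlm f).map fun m => fun j : Fin q =>
    if j = (ofLex m).2 then C ((f (ofLex m).2).coeff (ofLex m).1) * X ^ (ofLex m).1 else 0)

/-- The leading term submodule `L(F)`. -/
noncomputable def ltSubmodule {R : Type*} [CommRing R] {q : ℕ} (S : Set (Fin q → R[X])) :
    Submodule R[X] (Fin q → R[X]) :=
  Submodule.span R[X] (vlt '' S)

/-- `G` is a Gröbner basis of `M`: `G ⊆ M` and `L(G) = L(M)`. -/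
def IsGroebner {R : Type*} [CommRing R] {q : ℕ} (M : Submodule R[X] (Fin q → R[X]))
    (G : Finset (Fin q → R[X])) : Prop :=
  (G : Set (Fin q → R[X])) ⊆ M ∧
    ltSubmodule (G : Set (Fin q → R[X])) = ltSubmodule (M : Set (Fin q → R[X]))

/-- One-step reduction of `f` to `h` modulo the finite set `Fs` (Adams–Loustaunau Def. 4.1.1). -/
def ReducesOneStep {R : Type*} [CommRing R] {q : ℕ} (Fs : Finset (Fin q → R[X]))
    (f h : Fin q → R[X]) : Prop :=
  f ≠ 0 ∧ ∃ (m : ℕ) (jv : Fin m → Fin q → R[X]) (α : Fin m → ℕ) (β : Fin m → R),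
    0 < m ∧ (∀ i, jv i ∈ Fs) ∧ (∀ i, jv i ≠ 0) ∧ Function.Injective jv ∧ (∀ i, β i ≠ 0) ∧
    (∀ i, vlm f = (vlm (jv i)).map fun mm => toLex (α i + (ofLex mm).1, (ofLex mm).2)) ∧
    vlt f = ∑ i, (C (β i) * X ^ α i) • vlt (jv i) ∧
    h = f - ∑ i, (C (β i) * X ^ α i) • jv i

/-- Minimal Gröbner basis: a Gröbner basis each of whose elements is irreducible
modulo the others. -/
def IsMinimalGroebner {R : Type*} [CommRing R] {q : ℕ} (M : Submodule R[X] (Fin q → R[X]))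
    (G : Finset (Fin q → R[X])) : Prop :=
  IsGroebner M G ∧ ∀ g ∈ G, ∀ h, ¬ ReducesOneStep (G.erase g) g h

/-- `l = λ_0 + λ_1 x + ⋯ + λ_L x^L` is a feedback polynomial of length `L` for `S_1,…,S_N`:
`λ_0 ≠ 0` and `λ_0 S_{L+j} + ∑_{i=1}^L λ_i S_{L+j-i} = 0` for `j = 1,…,N-L`. -/
def IsFeedback {F : Type*} [Field F] (S : ℕ → F) (N L : ℕ) (l : Polynomial F) : Prop :=
  l.coeff 0 ≠ 0 ∧ l.natDegree ≤ L ∧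
    ∀ j, 1 ≤ j → j ≤ N - L → ∑ i ∈ Finset.range (L + 1), l.coeff i * S (L + j - i) = 0

/-- monomial as element of `WithBot (Lex (ℕ × Fin q))` -/
def vmono {q : ℕ} (d : ℕ) (j : Fin q) : WithBot (Lex (ℕ × Fin q)) :=
  ((toLex (d, j) : Lex (ℕ × Fin q)) : WithBot (Lex (ℕ × Fin q)))

theorem vmono_le_vmono {q : ℕ} {d d' : ℕ} {j j' : Fin q} :
    vmono d j ≤ vmono d' j' ↔ d < d' ∨ (d = d' ∧ j ≤ j') := by
  rw [vmono, vmono, WithBot.coe_le_coe, Prod.Lex.le_iff]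
  exact Iff.rfl

theorem vmono_lt_vmono {q : ℕ} {d d' : ℕ} {j j' : Fin q} :
    vmono d j < vmono d' j' ↔ d < d' ∨ (d = d' ∧ j < j') := by
  rw [vmono, vmono, WithBot.coe_lt_coe, Prod.Lex.lt_iff]
  exact Iff.rfl

theorem lex_exists {q : ℕ} (m : Lex (ℕ × Fin q)) : ∃ d j, m = toLex (d, j) :=
  ⟨(ofLex m).1, (ofLex m).2, rfl⟩

section API
variable {F : Type*} [Field F] {q : ℕ}

theorem mem_vsupp {f : Fin q → F[X]} {d : ℕ} {j : Fin q} :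
    toLex (d, j) ∈ vsupp f ↔ (f j).coeff d ≠ 0 := by
  simp only [vsupp, Finset.mem_biUnion, Finset.mem_univ, true_and, Finset.mem_image,
    mem_support_iff]
  constructor
  · rintro ⟨i, α, hα, h⟩
    have h2 : (α, i) = (d, j) := congrArg ofLex h
    obtain ⟨rfl, rfl⟩ := Prod.mk.injEq .. ▸ h2
    · exact hα
  · intro h; exact ⟨j, d, h, rfl⟩

theorem le_vlm {f : Fin q → F[X]} {d : ℕ} {j : Fin q} (h : (f j).coeff d ≠ 0) :
    vmono d j ≤ vlm f :=
  Finset.le_max (mem_vsupp.2 h)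

theorem vlm_le_iff {f : Fin q → F[X]} {b : WithBot (Lex (ℕ × Fin q))} :
    vlm f ≤ b ↔ ∀ j d, (f j).coeff d ≠ 0 → vmono d j ≤ b := by
  rw [vlm, Finset.max_le_iff]
  constructor
  · intro h j d hc; exact h _ (mem_vsupp.2 hc)
  · intro h m hm
    obtain ⟨d, j, rfl⟩ := lex_exists m
    exact h j d (mem_vsupp.1 hm)

theorem vlm_eq_bot {f : Fin q → F[X]} : vlm f = ⊥ ↔ f = 0 := by
  rw [vlm, Finset.max_eq_bot]
  constructor
  · intro h
    funext i; ext d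
    by_contra hc
    have : toLex (d, i) ∈ vsupp f := mem_vsupp.2 hc
    simp [h] at this
  · intro h
    ext m
    simp only [Finset.notMem_empty, iff_false]
    obtain ⟨d, j, rfl⟩ := lex_exists m
    rw [mem_vsupp]
    simp [h]

theorem vlm_coeff {f : Fin q → F[X]} {d : ℕ} {j : Fin q}
    (h : vlm f = vmono d j) : (f j).coeff d ≠ 0 :=
  mem_vsupp.1 (Finset.mem_of_max h)

theorem vdeg_eq {f : Fin q → F[X]} {d : ℕ} {j : Fin q}
    (h : vlm f = vmono d j) : vdeg f = d := by
  simp [vdeg, h, vmono]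

theorem vlt_eq {f : Fin q → F[X]} {d : ℕ} {j : Fin q} (h : vlm f = vmono d j) :
    vlt f = fun i => if i = j then C ((f j).coeff d) * X ^ d else 0 := by
  simp [vlt, h, vmono]
  funext i; by_cases hi : i = j <;> simp [hi]

end API

section API2
variable {F : Type*} [Field F]

theorem vlm_pos1 {f : Fin 2 → F[X]} (h1 : f 1 ≠ 0) (hle : (f 0).degree ≤ (f 1).degree) :
    vlm f = vmono (f 1).natDegree 1 := by
  apply le_antisymm
  · rw [vlm_le_iff]
    intro j d hc
    fin_cases j
    · have h' : (d : WithBot ℕ) ≤ (f 1).degree := le_trans (le_degree_of_ne_zero hc) hle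
      have hd : d ≤ (f 1).natDegree := by
        rwa [degree_eq_natDegree h1, Nat.cast_le] at h'
      rw [vmono_le_vmono]
      rcases lt_or_eq_of_le hd with h | h
      · exact Or.inl h
      · exact Or.inr ⟨h, by norm_num⟩
    · have h' : (d : WithBot ℕ) ≤ (f 1).degree := le_degree_of_ne_zero hc
      have hd : d ≤ (f 1).natDegree := by
        rwa [degree_eq_natDegree h1, Nat.cast_le] at h'
      rw [vmono_le_vmono]
      rcases lt_or_eq_of_le hd with h | h
      · exact Or.inl h
      · exact Or.inr ⟨h, le_refl _⟩
  · exact le_vlm (by simpa using mt leadingCoeff_eq_zero.1 h1)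

theorem vlm_pos0 {f : Fin 2 → F[X]} (hlt : (f 1).degree < (f 0).degree) :
    vlm f = vmono (f 0).natDegree 0 := by
  have h0 : f 0 ≠ 0 := by
    intro h; rw [h] at hlt; simp at hlt
  apply le_antisymm
  · rw [vlm_le_iff]
    intro j d hc
    fin_cases j
    · have h' : (d : WithBot ℕ) ≤ (f 0).degree := le_degree_of_ne_zero hc
      have hd : d ≤ (f 0).natDegree := by
        rwa [degree_eq_natDegree h0, Nat.cast_le] at h'
      rw [vmono_le_vmono]
      rcases lt_or_eq_of_le hd with h | h
      · exact Or.inl h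
      · exact Or.inr ⟨h, le_refl _⟩
    · have h' : (d : WithBot ℕ) < (f 0).degree := lt_of_le_of_lt (le_degree_of_ne_zero hc) hlt
      have hd : d < (f 0).natDegree := by
        rwa [degree_eq_natDegree h0, Nat.cast_lt] at h'
      exact vmono_le_vmono.2 (Or.inl hd)
  · exact le_vlm (by simpa using mt leadingCoeff_eq_zero.1 h0)

theorem of_vlm_pos1 {f : Fin 2 → F[X]} {d : ℕ} (h : vlm f = vmono d 1) :
    f 1 ≠ 0 ∧ (f 1).degree = (d : WithBot ℕ) ∧ (f 0).degree ≤ (d : WithBot ℕ) := by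
  have hc := vlm_coeff h
  have h1 : f 1 ≠ 0 := fun hz => hc (by simp [hz])
  have hle := vlm_le_iff.1 (le_of_eq h)
  have hdeg1 : (f 1).degree ≤ (d : WithBot ℕ) := by
    rw [degree_le_iff_coeff_zero]
    intro m hm
    by_contra hcm
    have h2 := vmono_le_vmono.1 (hle 1 m hcm)
    have hm' : d < m := by exact_mod_cast hm
    rcases h2 with h2 | h2 <;> omega
  refine ⟨h1, le_antisymm hdeg1 (le_degree_of_ne_zero hc), ?_⟩
  rw [degree_le_iff_coeff_zero]
  intro m hm
  by_contra hcm
  have h2 := vmono_le_vmono.1 (hle 0 m hcm)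
  have hm' : d < m := by exact_mod_cast hm
  rcases h2 with h2 | ⟨h2, h3⟩ <;> omega

theorem of_vlm_pos0 {f : Fin 2 → F[X]} {d : ℕ} (h : vlm f = vmono d 0) :
    f 0 ≠ 0 ∧ (f 0).degree = (d : WithBot ℕ) ∧ (f 1).degree < (d : WithBot ℕ) := by
  have hc := vlm_coeff h
  have h0 : f 0 ≠ 0 := fun hz => hc (by simp [hz])
  have hle := vlm_le_iff.1 (le_of_eq h)
  have hdeg0 : (f 0).degree ≤ (d : WithBot ℕ) := by
    rw [degree_le_iff_coeff_zero]
    intro m hm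
    by_contra hcm
    have h2 := vmono_le_vmono.1 (hle 0 m hcm)
    have hm' : d < m := by exact_mod_cast hm
    rcases h2 with h2 | ⟨h2, h3⟩ <;> omega
  refine ⟨h0, le_antisymm hdeg0 (le_degree_of_ne_zero hc), ?_⟩
  by_cases h1 : f 1 = 0
  · rw [h1]; simp
  · rw [degree_eq_natDegree h1, Nat.cast_lt]
    have hcn : (f 1).coeff (f 1).natDegree ≠ 0 := by
      simpa using mt leadingCoeff_eq_zero.1 h1
    have h2 := vmono_le_vmono.1 (hle 1 _ hcn)
    rcases h2 with h2 | ⟨h2, h3⟩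
    · exact h2
    · exfalso; exact absurd h3 (by norm_num)

theorem vlm_add_le {f g : Fin 2 → F[X]} :
    vlm (f + g) ≤ max (vlm f) (vlm g) := by
  rw [vlm_le_iff]
  intro j d hc
  have : (f j).coeff d ≠ 0 ∨ (g j).coeff d ≠ 0 := by
    by_contra hcon
    push_neg at hcon
    simp only [Pi.add_apply, coeff_add, hcon.1, hcon.2, add_zero] at hc
    exact hc rfl
  rcases this with h | h
  · exact le_trans (le_vlm h) (le_max_left _ _)
  · exact le_trans (le_vlm h) (le_max_right _ _)

theorem vlm_smul_pos0 {f : Fin 2 → F[X]} {d : ℕ} (h : vlm f = vmono d 0)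
    {a : F[X]} (ha : a ≠ 0) : vlm (a • f) = vmono (a.natDegree + d) 0 := by
  obtain ⟨h0, hdeg, hlt⟩ := of_vlm_pos0 h
  have key : vlm (a • f) = vmono ((a * f 0).natDegree) 0 := by
    apply vlm_pos0
    show (a * f 1).degree < (a * f 0).degree
    rw [degree_mul, degree_mul, hdeg]
    calc a.degree + (f 1).degree < a.degree + (d : WithBot ℕ) := by
          apply WithBot.add_lt_add_left (degree_ne_bot.2 ha) hlt
      _ = _ := rfl
  rw [key, natDegree_mul ha h0]
  congr 1
  rw [natDegree_eq_of_degree_eq_some hdeg]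

theorem vlm_smul_pos1 {f : Fin 2 → F[X]} {d : ℕ} (h : vlm f = vmono d 1)
    {a : F[X]} (ha : a ≠ 0) : vlm (a • f) = vmono (a.natDegree + d) 1 := by
  obtain ⟨h1, hdeg, hle⟩ := of_vlm_pos1 h
  have key : vlm (a • f) = vmono ((a * f 1).natDegree) 1 := by
    apply vlm_pos1
    · show a * f 1 ≠ 0
      exact mul_ne_zero ha h1
    · show (a * f 0).degree ≤ (a * f 1).degree
      rw [degree_mul, degree_mul, hdeg]
      exact add_le_add_right (hle.trans (le_of_eq hdeg.symm) |>.trans (le_of_eq hdeg)) _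
  rw [key, natDegree_mul ha h1]
  congr 1
  rw [natDegree_eq_of_degree_eq_some hdeg]

end API2

section API3
variable {F : Type*} [Field F]

theorem vlm_zero {q : ℕ} : vlm (0 : Fin q → F[X]) = ⊥ := vlm_eq_bot.2 rfl

theorem vlm_exists {q : ℕ} {f : Fin q → F[X]} (hf : f ≠ 0) :
    ∃ d j, vlm f = vmono d j := by
  have : vlm f ≠ ⊥ := fun h => hf (vlm_eq_bot.1 h)
  obtain ⟨m, hm⟩ := WithBot.ne_bot_iff_exists.1 this
  obtain ⟨d, j, rfl⟩ := lex_exists m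
  exact ⟨d, j, hm.symm⟩

theorem vlm_sub_lt {f g : Fin 2 → F[X]} (hf : f ≠ 0) (hg : g ≠ 0)
    (h : vlt f = vlt g) : vlm (f - g) < vlm f := by
  obtain ⟨D, j, hvf⟩ := vlm_exists hf
  obtain ⟨D', j', hvg⟩ := vlm_exists hg
  have hc : (f j).coeff D ≠ 0 := vlm_coeff hvf
  have hc' : (g j').coeff D' ≠ 0 := vlm_coeff hvg
  have hf' := vlt_eq hvf
  have hg' := vlt_eq hvg
  -- evaluate at j'
  have hev : (if j' = j then C ((f j).coeff D) * X ^ D else 0) = C ((g j').coeff D') * X ^ D' := by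
    have := congrFun (hf'.symm.trans (h.trans hg')) j'
    simpa using this
  have hjj : j' = j := by
    by_contra hne
    rw [if_neg hne] at hev
    have : (C ((g j').coeff D') * X ^ D').coeff D' = 0 := by rw [← hev]; simp
    simp [coeff_C_mul, coeff_X_pow] at this
    exact hc' this
  subst hjj
  rw [if_pos rfl] at hev
  have hDD : D = D' := by
    have := congrArg natDegree hev
    rwa [natDegree_C_mul_X_pow _ _ hc, natDegree_C_mul_X_pow _ _ hc'] at this
  subst hDD
  have hcc : (f j').coeff D = (g j').coeff D := by
    have := congrArg (fun p => Polynomial.coeff p D) hev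
    simpa [coeff_C_mul, coeff_X_pow] using this
  rw [hvf]
  apply lt_of_le_of_ne
  · rw [vlm_le_iff]
    intro i m hm
    have : (f i).coeff m ≠ 0 ∨ (g i).coeff m ≠ 0 := by
      by_contra hcon
      push_neg at hcon
      simp only [Pi.sub_apply, coeff_sub, hcon.1, hcon.2, sub_zero] at hm
      exact hm rfl
    rcases this with hh | hh
    · exact hvf ▸ le_vlm hh
    · exact (hvg.trans rfl) ▸ le_vlm hh
  · intro hceq
    have : ((f - g) j').coeff D ≠ 0 := vlm_coeff hceq
    apply this
    simp [coeff_sub, hcc]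

noncomputable def vmeas {q : ℕ} : WithBot (Lex (ℕ × Fin q)) → ℕ :=
  fun m => WithBot.unbotD 0 (m.map fun x => (q + 1) * (ofLex x).1 + (ofLex x).2 + 1)

theorem vmeas_bot {q : ℕ} : vmeas (⊥ : WithBot (Lex (ℕ × Fin q))) = 0 := rfl

theorem vmeas_coe {q : ℕ} (d : ℕ) (j : Fin q) :
    vmeas (vmono d j) = (q + 1) * d + (j : ℕ) + 1 := rfl

theorem vmeas_lt {a b : WithBot (Lex (ℕ × Fin 2))} (h : a < b) :
    vmeas a < vmeas b := by
  induction b with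
  | bot => exact absurd h (by simp)
  | coe m =>
    obtain ⟨d', j', rfl⟩ := lex_exists m
    have hj' : (j' : ℕ) < 2 := j'.isLt
    induction a with
    | bot =>
      rw [vmeas_bot]
      rw [show ((toLex (d', j') : Lex (ℕ × Fin 2)) : WithBot (Lex (ℕ × Fin 2))) = vmono d' j' from rfl,
        vmeas_coe]
      omega
    | coe m' =>
      obtain ⟨d, j, rfl⟩ := lex_exists m'
      have hj : (j : ℕ) < 2 := j.isLt
      have hlt : (d, j).1 < (d', j').1 ∨ (d, j).1 = (d', j').1 ∧ (d, j).2 < (d', j').2 :=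
        Prod.Lex.lt_iff.1 (WithBot.coe_lt_coe.1 h)
      rw [show ((toLex (d', j') : Lex (ℕ × Fin 2)) : WithBot (Lex (ℕ × Fin 2))) = vmono d' j' from rfl,
        show ((toLex (d, j) : Lex (ℕ × Fin 2)) : WithBot (Lex (ℕ × Fin 2))) = vmono d j from rfl,
        vmeas_coe, vmeas_coe]
      rcases hlt with h1 | ⟨h1, h2⟩
      · simp only at h1; omega
      · simp only at h1 h2
        have h2' : (j : ℕ) < (j' : ℕ) := h2
        omega

theorem plm {M : Submodule F[X] (Fin 2 → F[X])} {h₀ h₁ : Fin 2 → F[X]} {d₀ d₁ : ℕ}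
    (hm0 : vlm h₀ = vmono d₀ 0) (hm1 : vlm h₁ = vmono d₁ 1)
    (h₀M : h₀ ∈ M) (h₁M : h₁ ∈ M)
    (hspan : ∀ v ∈ M, v ≠ 0 → vlt v ∈ Submodule.span F[X] ({vlt h₀, vlt h₁} : Set (Fin 2 → F[X]))) :
    ∀ v ∈ M, ∃ a b : F[X], v = a • h₀ + b • h₁ ∧ vlm (a • h₀) ≤ vlm v ∧ vlm (b • h₁) ≤ vlm v := by
  have hc₀ : (h₀ 0).coeff d₀ ≠ 0 := vlm_coeff hm0
  have hc₁ : (h₁ 1).coeff d₁ ≠ 0 := vlm_coeff hm1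
  intro v hv
  generalize hn : vmeas (vlm v) = n
  induction n using Nat.strong_induction_on generalizing v with
  | _ n IH =>
  by_cases hv0 : v = 0
  · refine ⟨0, 0, by simp [hv0], ?_, ?_⟩ <;> simp [vlm_zero]
  obtain ⟨D, j, hvlm⟩ := vlm_exists hv0
  have hcv : (v j).coeff D ≠ 0 := vlm_coeff hvlm
  obtain ⟨p, p', hpq⟩ := Submodule.mem_span_pair.1 (hspan v hv hv0)
  have hvltv := vlt_eq hvlm
  have hvlt0 := vlt_eq hm0
  have hvlt1 := vlt_eq hm1
  have hj2 : j = 0 ∨ j = 1 := by fin_cases j <;> simp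
  -- construct the term t and the generator h used for reduction, uniformly
  obtain ⟨h', t, hcase, hh'M, hth, htlt⟩ :
      ∃ (h' : Fin 2 → F[X]) (t : F[X]), (h' = h₀ ∨ h' = h₁) ∧ h' ∈ M ∧
        vlm (t • h') = vmono D j ∧ vlt (t • h') = vlt v := by
    rcases hj2 with rfl | rfl
    · -- leading position 0 : reduce by h₀
      have hev : p * (C ((h₀ 0).coeff d₀) * X ^ d₀) = C ((v 0).coeff D) * X ^ D := by
        have := congrFun hpq 0
        simp only [Pi.add_apply, Pi.smul_apply, smul_eq_mul, hvlt0, hvlt1, hvltv] at this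
        simpa using this
      have hp0 : p ≠ 0 := by
        intro h; rw [h, zero_mul] at hev
        have := congrArg (fun r => Polynomial.coeff r D) hev
        simp [coeff_C_mul, coeff_X_pow] at this
        exact hcv this.symm
      have hCX0 : C ((h₀ 0).coeff d₀) * X ^ d₀ ≠ 0 := fun h => hc₀ (by
        have := congrArg (fun r => Polynomial.coeff r d₀) h
        simpa [coeff_C_mul, coeff_X_pow] using this)
      have hDd : D = p.natDegree + d₀ := by
        have h2 := congrArg natDegree hev
        rw [natDegree_mul hp0 hCX0, natDegree_C_mul_X_pow _ _ hc₀,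
          natDegree_C_mul_X_pow _ _ hcv] at h2
        omega
      set c := (v 0).coeff D with hcdef
      set t := C (c * ((h₀ 0).coeff d₀)⁻¹) * X ^ (D - d₀) with htdef
      have htne : t ≠ 0 := by
        rw [htdef]
        exact mul_ne_zero (C_ne_zero.2 (mul_ne_zero hcv (inv_ne_zero hc₀)))
          (pow_ne_zero _ X_ne_zero)
      have htnd : t.natDegree = D - d₀ := natDegree_C_mul_X_pow _ _ (by
        intro h; exact htne (by rw [htdef, h]; simp))
      have hvlmt : vlm (t • h₀) = vmono D 0 := by
        rw [vlm_smul_pos0 hm0 htne, htnd]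
        congr 1
        omega
      refine ⟨h₀, t, Or.inl rfl, h₀M, hvlmt, ?_⟩
      rw [vlt_eq hvlmt, hvltv]
      funext i
      congr 1
      have : ((t • h₀) 0).coeff D = c := by
        show (t * h₀ 0).coeff D = c
        rw [htdef, mul_assoc, coeff_C_mul]
        obtain ⟨k, hk⟩ : ∃ k, D = d₀ + k := ⟨D - d₀, by omega⟩
        have hk2 : D - d₀ = k := by omega
        rw [hk2, hk, coeff_X_pow_mul]
        field_simp
      rw [this]
    · -- leading position 1 : reduce by h₁
      have hev : p' * (C ((h₁ 1).coeff d₁) * X ^ d₁) = C ((v 1).coeff D) * X ^ D := by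
        have := congrFun hpq 1
        simp only [Pi.add_apply, Pi.smul_apply, smul_eq_mul, hvlt0, hvlt1, hvltv] at this
        simpa using this
      have hp0 : p' ≠ 0 := by
        intro h; rw [h, zero_mul] at hev
        have := congrArg (fun r => Polynomial.coeff r D) hev
        simp [coeff_C_mul, coeff_X_pow] at this
        exact hcv this.symm
      have hCX1 : C ((h₁ 1).coeff d₁) * X ^ d₁ ≠ 0 := fun h => hc₁ (by
        have := congrArg (fun r => Polynomial.coeff r d₁) h
        simpa [coeff_C_mul, coeff_X_pow] using this)
      have hDd : D = p'.natDegree + d₁ := by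
        have h2 := congrArg natDegree hev
        rw [natDegree_mul hp0 hCX1, natDegree_C_mul_X_pow _ _ hc₁,
          natDegree_C_mul_X_pow _ _ hcv] at h2
        omega
      set c := (v 1).coeff D with hcdef
      set t := C (c * ((h₁ 1).coeff d₁)⁻¹) * X ^ (D - d₁) with htdef
      have htne : t ≠ 0 := by
        rw [htdef]
        exact mul_ne_zero (C_ne_zero.2 (mul_ne_zero hcv (inv_ne_zero hc₁)))
          (pow_ne_zero _ X_ne_zero)
      have htnd : t.natDegree = D - d₁ := natDegree_C_mul_X_pow _ _ (by
        intro h; exact htne (by rw [htdef, h]; simp))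
      have hvlmt : vlm (t • h₁) = vmono D 1 := by
        rw [vlm_smul_pos1 hm1 htne, htnd]
        congr 1
        omega
      refine ⟨h₁, t, Or.inr rfl, h₁M, hvlmt, ?_⟩
      rw [vlt_eq hvlmt, hvltv]
      funext i
      congr 1
      have : ((t • h₁) 1).coeff D = c := by
        show (t * h₁ 1).coeff D = c
        rw [htdef, mul_assoc, coeff_C_mul]
        obtain ⟨k, hk⟩ : ∃ k, D = d₁ + k := ⟨D - d₁, by omega⟩
        have hk2 : D - d₁ = k := by omega
        rw [hk2, hk, coeff_X_pow_mul]
        field_simp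
      rw [this]
  -- reduction step
  have hth' : t • h' ≠ 0 := by
    intro h
    rw [h, vlm_zero] at hth
    simp [vmono] at hth
  set v' := v - t • h' with hv'def
  have hv'M : v' ∈ M := Submodule.sub_mem M hv (Submodule.smul_mem M t hh'M)
  have hlt : vlm v' < vlm v := vlm_sub_lt hv0 hth' htlt.symm
  obtain ⟨a', b', hdec, ha', hb'⟩ := IH (vmeas (vlm v')) (hn ▸ vmeas_lt hlt) v' hv'M rfl
  have hvv : v = v' + t • h' := by rw [hv'def]; abel
  have hthv : vlm (t • h') = vlm v := by rw [hth, hvlm]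
  rcases hcase with rfl | rfl
  · refine ⟨a' + t, b', ?_, ?_, ?_⟩
    · rw [add_smul, hvv, hdec]; abel
    · calc vlm ((a' + t) • h') = vlm (a' • h' + t • h') := by rw [add_smul]
        _ ≤ max (vlm (a' • h')) (vlm (t • h')) := vlm_add_le
        _ ≤ vlm v := max_le (le_trans ha' (le_of_lt hlt)) (le_of_eq hthv)
    · exact le_trans hb' (le_of_lt hlt)
  · refine ⟨a', b' + t, ?_, ?_, ?_⟩
    · rw [add_smul, hvv, hdec]; abel
    · exact le_trans ha' (le_of_lt hlt)
    · calc vlm ((b' + t) • h') = vlm (b' • h' + t • h') := by rw [add_smul]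
        _ ≤ max (vlm (b' • h')) (vlm (t • h')) := vlm_add_le
        _ ≤ vlm v := max_le (le_trans hb' (le_of_lt hlt)) (le_of_eq hthv)

end API3

section MOD
variable {F : Type*} [Field F]

noncomputable def SxP (S : ℕ → F) (N : ℕ) : F[X] :=
  ∑ i ∈ Finset.range N, C (S (i + 1)) * X ^ (i + 1)

noncomputable def MP (S : ℕ → F) (N : ℕ) : Submodule F[X] (Fin 2 → F[X]) :=
  Submodule.span F[X]
    ({![X ^ (N + 1), 0], ![-(∑ i ∈ Finset.range N, C (S (i + 1)) * X ^ (i + 1)), 1]} :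
      Set (Fin 2 → F[X]))

theorem SxP_coeff (S : ℕ → F) (N : ℕ) (m : ℕ) :
    (SxP S N).coeff m = if 1 ≤ m ∧ m ≤ N then S m else 0 := by
  rw [SxP, finset_sum_coeff]
  simp only [coeff_C_mul, coeff_X_pow, mul_ite, mul_one, mul_zero]
  by_cases h : 1 ≤ m ∧ m ≤ N
  · rw [if_pos h, Finset.sum_eq_single (m - 1)]
    · rw [if_pos (by omega)]
      congr 1
      omega
    · intro i hi hne
      rw [if_neg]
      simp only [Finset.mem_range] at hi
      omega
    · intro h'
      exfalso
      simp only [Finset.mem_range] at h'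
      omega
  · rw [if_neg h]
    apply Finset.sum_eq_zero
    intro i hi
    simp only [Finset.mem_range] at hi
    rw [if_neg]
    omega

theorem smul_pair {S : ℕ → F} {N : ℕ} (p q : F[X]) :
    p • ![X ^ (N + 1), (0 : F[X])] +
      q • ![-(∑ i ∈ Finset.range N, C (S (i + 1)) * X ^ (i + 1)), 1] =
    ![p * X ^ (N + 1) - q * SxP S N, q] := by
  funext i
  fin_cases i <;>
    simp [SxP, Matrix.cons_val_zero, Matrix.cons_val_one, Matrix.head_cons] <;> ring

theorem mem_MP {S : ℕ → F} {N : ℕ} {v : Fin 2 → F[X]} :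
    v ∈ MP S N ↔ ∃ a, v 0 = a * X ^ (N + 1) - v 1 * SxP S N := by
  rw [MP, Submodule.mem_span_pair]
  constructor
  · rintro ⟨a, b, h⟩
    rw [smul_pair] at h
    have h0 := congrFun h 0
    have h1 := congrFun h 1
    simp only [Matrix.cons_val_zero, Matrix.cons_val_one, Matrix.head_cons] at h0 h1
    exact ⟨a, by rw [← h0, h1]⟩
  · rintro ⟨a, h⟩
    refine ⟨a, v 1, ?_⟩
    rw [smul_pair]
    funext i
    fin_cases i <;>
      simp only [Matrix.cons_val_zero, Matrix.cons_val_one, Matrix.head_cons, Fin.zero_eta,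
        Fin.mk_one]
    exact h.symm

/-- `Good v L'` : `v` certifies a feedback polynomial of length `L'`. -/
def Good (S : ℕ → F) (N L' : ℕ) (v : Fin 2 → F[X]) : Prop :=
  v ∈ MP S N ∧ (v 1).coeff 0 ≠ 0 ∧ (v 0).degree ≤ (L' : WithBot ℕ) ∧
    (v 1).degree ≤ (L' : WithBot ℕ)

theorem coeff_mul_SxP {S : ℕ → F} {N : ℕ} {l : F[X]} {L' k : ℕ}
    (hdeg : l.natDegree ≤ L') (h1 : L' < k) (h2 : k ≤ N) :
    (l * SxP S N).coeff k = ∑ i ∈ Finset.range (L' + 1), l.coeff i * S (k - i) := by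
  rw [coeff_mul, Finset.Nat.sum_antidiagonal_eq_sum_range_succ_mk]
  rw [← Finset.sum_subset (Finset.range_subset_range.2 (by omega : L' + 1 ≤ k + 1))]
  · apply Finset.sum_congr rfl
    intro i hi
    simp only [Finset.mem_range] at hi
    rw [SxP_coeff, if_pos (by omega)]
  · intro i hi hni
    simp only [Finset.mem_range] at hi hni
    rw [coeff_eq_zero_of_natDegree_lt (by omega), zero_mul]

theorem feedback_iff_good {S : ℕ → F} {N L' : ℕ} {l : F[X]} :
    IsFeedback S N L' l ↔ ∃ v, Good S N L' v ∧ v 1 = l := by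
  constructor
  · rintro ⟨h0, hdeg, hsum⟩
    set a := (l * SxP S N) /ₘ X ^ (N + 1) with ha
    refine ⟨![a * X ^ (N + 1) - l * SxP S N, l], ⟨?_, ?_, ?_, ?_⟩, rfl⟩
    · rw [mem_MP]
      exact ⟨a, by simp⟩
    · simpa using h0
    · show (a * X ^ (N + 1) - l * SxP S N).degree ≤ (L' : WithBot ℕ)
      have hmod : a * X ^ (N + 1) - l * SxP S N = -(l * SxP S N %ₘ X ^ (N + 1)) := by
        rw [modByMonic_eq_sub_mul_div _ (X ^ (N + 1))]
        ring
      rw [hmod, degree_neg, degree_le_iff_coeff_zero]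
      intro m hm
      have hm' : L' < m := by exact_mod_cast hm
      by_cases hmN : m ≤ N
      · rw [modByMonic_eq_sub_mul_div _ (X ^ (N + 1)), coeff_sub]
        have hz : (X ^ (N + 1) * (l * SxP S N /ₘ X ^ (N + 1))).coeff m = 0 := by
          rw [mul_comm, coeff_mul_X_pow']
          rw [if_neg (by omega)]
        rw [hz, sub_zero]
        rw [coeff_mul_SxP hdeg hm' hmN]
        have := hsum (m - L') (by omega) (by omega)
        rw [← this]
        apply Finset.sum_congr rfl
        intro i hi
        simp only [Finset.mem_range] at hi
        congr 2
        omega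
      · apply coeff_eq_zero_of_degree_lt
        apply lt_of_lt_of_le (degree_modByMonic_lt _ (monic_X_pow (N + 1)))
        rw [degree_X_pow]
        exact_mod_cast (by omega : N + 1 ≤ m)
    · show (l : F[X]).degree ≤ (L' : WithBot ℕ)
      exact natDegree_le_iff_degree_le.1 hdeg
  · rintro ⟨v, ⟨hvM, hc0, hd0, hd1⟩, rfl⟩
    refine ⟨hc0, natDegree_le_iff_degree_le.2 hd1, ?_⟩
    intro j hj1 hj2
    have hLN : L' < N := by omega
    set k := L' + j with hk
    have hkN : k ≤ N := by omega
    obtain ⟨a, hva⟩ := mem_MP.1 hvM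
    have hcv0 : (v 0).coeff k = 0 :=
      coeff_eq_zero_of_degree_lt (lt_of_le_of_lt hd0 (by exact_mod_cast (by omega : L' < k)))
    have hsum : (v 1 * SxP S N).coeff k = 0 := by
      have : v 1 * SxP S N = a * X ^ (N + 1) - v 0 := by rw [hva]; ring
      rw [this, coeff_sub, hcv0, sub_zero, coeff_mul_X_pow', if_neg (by omega)]
    rw [coeff_mul_SxP (natDegree_le_iff_degree_le.2 hd1) (by omega) hkN] at hsum
    exact hsum

end MOD

section CORE
variable {F : Type*} [Field F]

theorem vlt_zero' {q : ℕ} : vlt (0 : Fin q → F[X]) = 0 := by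
  simp [vlt, vlm_zero]

theorem vlm_le_of_good {v : Fin 2 → F[X]} {L' : ℕ}
    (h0 : (v 0).degree ≤ (L' : WithBot ℕ)) (h1 : (v 1).degree ≤ (L' : WithBot ℕ)) :
    vlm v ≤ vmono L' 1 := by
  rw [vlm_le_iff]
  intro j d hc
  have hd : (d : WithBot ℕ) ≤ (L' : WithBot ℕ) := by
    refine le_trans (le_degree_of_ne_zero hc) ?_
    fin_cases j
    · exact h0
    · exact h1
  have hd' : d ≤ L' := by exact_mod_cast hd
  rw [vmono_le_vmono]
  rcases lt_or_eq_of_le hd' with h | h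
  · exact Or.inl h
  · exact Or.inr ⟨h, by have := j.isLt; exact Fin.le_def.2 (by omega)⟩

theorem mul_coeff_zero' (p r : F[X]) : (p * r).coeff 0 = p.coeff 0 * r.coeff 0 := by
  simp [coeff_mul]

theorem decomp_good {S : ℕ → F} {N : ℕ} {h₀ h₁ : Fin 2 → F[X]} {d₀ d₁ : ℕ}
    (hm0 : vlm h₀ = vmono d₀ 0) (hm1 : vlm h₁ = vmono d₁ 1)
    (h₀M : h₀ ∈ MP S N) (h₁M : h₁ ∈ MP S N)
    (hspan : ∀ v ∈ MP S N, v ≠ 0 →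
      vlt v ∈ Submodule.span F[X] ({vlt h₀, vlt h₁} : Set (Fin 2 → F[X])))
    {L' : ℕ} {v : Fin 2 → F[X]} (hg : Good S N L' v) :
    ∃ a b : F[X], v = a • h₀ + b • h₁ ∧
      (a = 0 ∨ a.natDegree + d₀ ≤ L') ∧ (b = 0 ∨ b.natDegree + d₁ ≤ L') ∧
      (v 1).coeff 0 = a.coeff 0 * (h₀ 1).coeff 0 + b.coeff 0 * (h₁ 1).coeff 0 := by
  obtain ⟨hM, hc, hd0, hd1⟩ := hg
  obtain ⟨a, b, hdec, ha, hb⟩ := plm hm0 hm1 h₀M h₁M hspan v hM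
  have hle : vlm v ≤ vmono L' 1 := vlm_le_of_good hd0 hd1
  refine ⟨a, b, hdec, ?_, ?_, ?_⟩
  · by_cases h : a = 0
    · exact Or.inl h
    · right
      have h2 : vmono (a.natDegree + d₀) (0 : Fin 2) ≤ vmono L' 1 := by
        rw [← vlm_smul_pos0 hm0 h]
        exact le_trans ha hle
      rcases vmono_le_vmono.1 h2 with h3 | ⟨h3, _⟩ <;> omega
  · by_cases h : b = 0
    · exact Or.inl h
    · right
      have h2 : vmono (b.natDegree + d₁) (1 : Fin 2) ≤ vmono L' 1 := by
        rw [← vlm_smul_pos1 hm1 h]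
        exact le_trans hb hle
      rcases vmono_le_vmono.1 h2 with h3 | ⟨h3, _⟩ <;> omega
  · have h1 := congrFun hdec 1
    simp only [Pi.add_apply, Pi.smul_apply, smul_eq_mul] at h1
    rw [h1, coeff_add, mul_coeff_zero', mul_coeff_zero']

theorem good_mk {S : ℕ → F} {N : ℕ} {h₀ h₁ : Fin 2 → F[X]} {d₀ d₁ : ℕ}
    (hm0 : vlm h₀ = vmono d₀ 0) (hm1 : vlm h₁ = vmono d₁ 1)
    (h₀M : h₀ ∈ MP S N) (h₁M : h₁ ∈ MP S N) {L' : ℕ} (a b : F[X])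
    (hda : a.degree + (d₀ : WithBot ℕ) ≤ (L' : WithBot ℕ))
    (hdb : b.degree + (d₁ : WithBot ℕ) ≤ (L' : WithBot ℕ))
    (hcoef : a.coeff 0 * (h₀ 1).coeff 0 + b.coeff 0 * (h₁ 1).coeff 0 ≠ 0) :
    Good S N L' (a • h₀ + b • h₁) := by
  obtain ⟨hne0, hdeg0, hlt0⟩ := of_vlm_pos0 hm0
  obtain ⟨hne1, hdeg1, hle1⟩ := of_vlm_pos1 hm1
  refine ⟨Submodule.add_mem _ (Submodule.smul_mem _ a h₀M) (Submodule.smul_mem _ b h₁M),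
    ?_, ?_, ?_⟩
  · show ((a • h₀ + b • h₁) 1).coeff 0 ≠ 0
    simp only [Pi.add_apply, Pi.smul_apply, smul_eq_mul]
    rw [coeff_add, mul_coeff_zero', mul_coeff_zero']
    exact hcoef
  · show ((a • h₀ + b • h₁) 0).degree ≤ (L' : WithBot ℕ)
    simp only [Pi.add_apply, Pi.smul_apply, smul_eq_mul]
    refine le_trans (degree_add_le _ _) (max_le ?_ ?_)
    · refine le_trans (degree_mul_le _ _) (le_trans ?_ hda)
      exact add_le_add_right (le_of_eq hdeg0) _
    · refine le_trans (degree_mul_le _ _) (le_trans ?_ hdb)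
      exact add_le_add_right hle1 _
  · show ((a • h₀ + b • h₁) 1).degree ≤ (L' : WithBot ℕ)
    simp only [Pi.add_apply, Pi.smul_apply, smul_eq_mul]
    refine le_trans (degree_add_le _ _) (max_le ?_ ?_)
    · refine le_trans (degree_mul_le _ _) (le_trans ?_ hda)
      exact add_le_add_right (le_of_lt hlt0) _
    · refine le_trans (degree_mul_le _ _) (le_trans ?_ hdb)
      exact add_le_add_right (le_of_eq hdeg1) _

end CORE

section CASES
variable {F : Type*} [Field F]

theorem caseA {S : ℕ → F} {N : ℕ} {h₀ h₁ : Fin 2 → F[X]} {d₀ d₁ : ℕ}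
    (hm0 : vlm h₀ = vmono d₀ 0) (hm1 : vlm h₁ = vmono d₁ 1)
    (h₀M : h₀ ∈ MP S N) (h₁M : h₁ ∈ MP S N)
    (hspan : ∀ v ∈ MP S N, v ≠ 0 →
      vlt v ∈ Submodule.span F[X] ({vlt h₀, vlt h₁} : Set (Fin 2 → F[X])))
    (h12 : (h₀ 1).coeff 0 = 0) (h22 : (h₁ 1).coeff 0 ≠ 0) :
    IsFeedback S N d₁ (h₁ 1) ∧
    (∀ L' l, IsFeedback S N L' l → d₁ ≤ L') ∧
    (∀ l : F[X], IsFeedback S N d₁ l ↔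
      ∃ (a : F) (b : F[X]), a ≠ 0 ∧ (b = 0 ∨ b.natDegree + d₀ ≤ d₁) ∧
        l = C a * h₁ 1 + b * h₀ 1) := by
  refine ⟨?_, ?_, ?_⟩
  · -- h₁ 1 is a feedback polynomial of length d₁
    rw [feedback_iff_good]
    refine ⟨(0 : F[X]) • h₀ + (1 : F[X]) • h₁, ?_, by simp⟩
    apply good_mk hm0 hm1 h₀M h₁M
    · simp
    · rw [degree_one, zero_add]
    · simpa using h22
  · -- minimality
    intro L' l hfb
    obtain ⟨v, hg, hv1⟩ := feedback_iff_good.1 hfb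
    obtain ⟨a, b, hdec, ha, hb, hcf⟩ := decomp_good hm0 hm1 h₀M h₁M hspan hg
    have hb0 : b.coeff 0 ≠ 0 := by
      intro h
      rw [h12, h, mul_zero, zero_mul, add_zero] at hcf
      exact hg.2.1 hcf
    have hbne : b ≠ 0 := fun h => hb0 (by rw [h]; simp)
    rcases hb with h | h
    · exact absurd h hbne
    · omega
  · intro l
    constructor
    · intro hfb
      obtain ⟨v, hg, hv1⟩ := feedback_iff_good.1 hfb
      obtain ⟨a, b, hdec, ha, hb, hcf⟩ := decomp_good hm0 hm1 h₀M h₁M hspan hg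
      have hb0 : b.coeff 0 ≠ 0 := by
        intro h
        rw [h12, h, mul_zero, zero_mul, add_zero] at hcf
        exact hg.2.1 hcf
      have hbne : b ≠ 0 := fun h => hb0 (by rw [h]; simp)
      have hbn : b.natDegree = 0 := by
        rcases hb with h | h
        · exact absurd h hbne
        · omega
      have hbC : b = C (b.coeff 0) := eq_C_of_natDegree_le_zero (le_of_eq hbn)
      have hv1' : l = a * h₀ 1 + b * h₁ 1 := by
        rw [← hv1, hdec]
        simp
      refine ⟨b.coeff 0, a, hb0, ?_, ?_⟩
      · rcases ha with h | h
        · exact Or.inl h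
        · exact Or.inr h
      · rw [hv1', ← hbC]
        ring
    · rintro ⟨a, b, haz, hbc, rfl⟩
      rw [feedback_iff_good]
      refine ⟨b • h₀ + (C a) • h₁, ?_, ?_⟩
      · apply good_mk hm0 hm1 h₀M h₁M
        · rcases hbc with rfl | h
          · simp
          · refine le_trans (add_le_add_left degree_le_natDegree _) ?_
            rw [← Nat.cast_add]
            exact_mod_cast h
        · refine le_trans (add_le_add_left degree_C_le _) ?_
          rw [zero_add]
        · rw [h12, mul_zero, zero_add, coeff_C]
          simpa using mul_ne_zero haz h22
      · simp only [Pi.add_apply, Pi.smul_apply, smul_eq_mul]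
        ring

theorem caseB {S : ℕ → F} {N : ℕ} {h₀ h₁ : Fin 2 → F[X]} {d₀ d₁ : ℕ}
    (hm0 : vlm h₀ = vmono d₀ 0) (hm1 : vlm h₁ = vmono d₁ 1)
    (h₀M : h₀ ∈ MP S N) (h₁M : h₁ ∈ MP S N)
    (hspan : ∀ v ∈ MP S N, v ≠ 0 →
      vlt v ∈ Submodule.span F[X] ({vlt h₀, vlt h₁} : Set (Fin 2 → F[X])))
    (h12 : (h₁ 1).coeff 0 = 0) (h22 : (h₀ 1).coeff 0 ≠ 0) :
    IsFeedback S N d₀ (h₀ 1) ∧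
    (∀ L' l, IsFeedback S N L' l → d₀ ≤ L') ∧
    (∀ l : F[X], IsFeedback S N d₀ l ↔
      ∃ (a : F) (b : F[X]), a ≠ 0 ∧ (b = 0 ∨ b.natDegree + d₁ ≤ d₀) ∧
        l = C a * h₀ 1 + b * h₁ 1) := by
  refine ⟨?_, ?_, ?_⟩
  · rw [feedback_iff_good]
    refine ⟨(1 : F[X]) • h₀ + (0 : F[X]) • h₁, ?_, by simp⟩
    apply good_mk hm0 hm1 h₀M h₁M
    · rw [degree_one, zero_add]
    · simp
    · simpa using h22
  · intro L' l hfb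
    obtain ⟨v, hg, hv1⟩ := feedback_iff_good.1 hfb
    obtain ⟨a, b, hdec, ha, hb, hcf⟩ := decomp_good hm0 hm1 h₀M h₁M hspan hg
    have ha0 : a.coeff 0 ≠ 0 := by
      intro h
      rw [h12, h, mul_zero, zero_mul, add_zero] at hcf
      exact hg.2.1 hcf
    have hane : a ≠ 0 := fun h => ha0 (by rw [h]; simp)
    rcases ha with h | h
    · exact absurd h hane
    · omega
  · intro l
    constructor
    · intro hfb
      obtain ⟨v, hg, hv1⟩ := feedback_iff_good.1 hfb
      obtain ⟨a, b, hdec, ha, hb, hcf⟩ := decomp_good hm0 hm1 h₀M h₁M hspan hg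
      have ha0 : a.coeff 0 ≠ 0 := by
        intro h
        rw [h12, h, mul_zero, zero_mul, add_zero] at hcf
        exact hg.2.1 hcf
      have hane : a ≠ 0 := fun h => ha0 (by rw [h]; simp)
      have han : a.natDegree = 0 := by
        rcases ha with h | h
        · exact absurd h hane
        · omega
      have haC : a = C (a.coeff 0) := eq_C_of_natDegree_le_zero (le_of_eq han)
      have hv1' : l = a * h₀ 1 + b * h₁ 1 := by
        rw [← hv1, hdec]
        simp
      refine ⟨a.coeff 0, b, ha0, ?_, ?_⟩
      · rcases hb with h | h
        · exact Or.inl h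
        · exact Or.inr h
      · rw [hv1', ← haC]
    · rintro ⟨a, b, haz, hbc, rfl⟩
      rw [feedback_iff_good]
      refine ⟨(C a) • h₀ + b • h₁, ?_, ?_⟩
      · apply good_mk hm0 hm1 h₀M h₁M
        · refine le_trans (add_le_add_left degree_C_le _) ?_
          rw [zero_add]
        · rcases hbc with rfl | h
          · simp
          · refine le_trans (add_le_add_left degree_le_natDegree _) ?_
            rw [← Nat.cast_add]
            exact_mod_cast h
        · rw [h12, mul_zero, add_zero, coeff_C]
          simpa using mul_ne_zero haz h22
      · simp only [Pi.add_apply, Pi.smul_apply, smul_eq_mul]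

end CASES

section SPLIT
variable {F : Type*} [Field F]

theorem exists_lpos {S : ℕ → F} {N : ℕ} {g₁ g₂ : Fin 2 → F[X]}
    (hlt : Submodule.span F[X] ({vlt g₁, vlt g₂} : Set (Fin 2 → F[X])) =
      ltSubmodule ((MP S N : Set (Fin 2 → F[X]))))
    (j : Fin 2) (w : Fin 2 → F[X]) (hwM : w ∈ MP S N) {dw : ℕ}
    (hw : vlm w = vmono dw j) :
    ∃ g ∈ ({g₁, g₂} : Set (Fin 2 → F[X])), ∃ d, vlm g = vmono d j := by
  by_contra hcon
  push_neg at hcon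
  have hker : ∀ g ∈ ({g₁, g₂} : Set (Fin 2 → F[X])),
      vlt g ∈ LinearMap.ker (LinearMap.proj j : (Fin 2 → F[X]) →ₗ[F[X]] F[X]) := by
    intro g hg
    rw [LinearMap.mem_ker]
    show (vlt g) j = 0
    by_cases hgz : g = 0
    · rw [hgz, vlt_zero']; rfl
    · obtain ⟨dg, jg, hvg⟩ := vlm_exists hgz
      have hjg : jg ≠ j := by
        intro h
        exact absurd hvg (h ▸ hcon g hg dg)
      rw [vlt_eq hvg]
      show (if j = jg then C ((g jg).coeff dg) * X ^ dg else 0) = 0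
      exact if_neg (Ne.symm hjg)
  have hsp : Submodule.span F[X] ({vlt g₁, vlt g₂} : Set (Fin 2 → F[X])) ≤
      LinearMap.ker (LinearMap.proj j : (Fin 2 → F[X]) →ₗ[F[X]] F[X]) := by
    rw [Submodule.span_le]
    rintro x (rfl | rfl)
    · exact hker g₁ (Or.inl rfl)
    · exact hker g₂ (Or.inr rfl)
  have hw' : vlt w ∈ Submodule.span F[X] ({vlt g₁, vlt g₂} : Set (Fin 2 → F[X])) := by
    rw [hlt]
    exact Submodule.subset_span ⟨w, hwM, rfl⟩
  have hz : (vlt w) j = 0 := hsp hw'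
  rw [vlt_eq hw] at hz
  have hz' : (if j = j then C ((w j).coeff dw) * X ^ dw else 0) = 0 := hz
  rw [if_pos rfl] at hz'
  exact mul_ne_zero (C_ne_zero.2 (vlm_coeff hw)) (pow_ne_zero _ X_ne_zero) hz'

theorem pos_split {S : ℕ → F} {N : ℕ} {g₁ g₂ : Fin 2 → F[X]}
    (hsub : ({g₁, g₂} : Set (Fin 2 → F[X])) ⊆ (MP S N : Set (Fin 2 → F[X])))
    (hlt : Submodule.span F[X] ({vlt g₁, vlt g₂} : Set (Fin 2 → F[X])) =
      ltSubmodule ((MP S N : Set (Fin 2 → F[X])))) :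
    ∃ d d', (vlm g₁ = vmono d 0 ∧ vlm g₂ = vmono d' 1) ∨
      (vlm g₂ = vmono d 0 ∧ vlm g₁ = vmono d' 1) := by
  have hw0M : (![X ^ (N + 1), (0 : F[X])]) ∈ MP S N := by
    rw [mem_MP]
    exact ⟨1, by simp⟩
  have hw0 : vlm (![X ^ (N + 1), (0 : F[X])]) = vmono (N + 1) 0 := by
    have h := vlm_pos0 (f := ![X ^ (N + 1), (0 : F[X])]) (by
      simp only [Matrix.cons_val_one, Matrix.head_cons, Matrix.cons_val_zero, degree_zero,
        degree_X_pow]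
      exact WithBot.bot_lt_coe _)
    simpa using h
  have hw1M : (![(0 : F[X]), X ^ (N + 1)]) ∈ MP S N := by
    rw [mem_MP]
    refine ⟨SxP S N, by simp [mul_comm]⟩
  have hw1 : vlm (![(0 : F[X]), X ^ (N + 1)]) = vmono (N + 1) 1 := by
    have h := vlm_pos1 (f := ![(0 : F[X]), X ^ (N + 1)])
      (by simp [pow_ne_zero _ (X_ne_zero (R := F))])
      (by simp)
    simpa using h
  obtain ⟨gA, hgA, dA, hA⟩ := exists_lpos hlt 0 _ hw0M hw0
  obtain ⟨gB, hgB, dB, hB⟩ := exists_lpos hlt 1 _ hw1M hw1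
  have hABne : gA ≠ gB := by
    intro h
    rw [h, hB] at hA
    have h2 : (toLex (dB, (1 : Fin 2)) : Lex (ℕ × Fin 2)) = toLex (dA, 0) :=
      WithBot.coe_inj.1 hA
    have h3 := congrArg (fun x => (ofLex x).2) h2
    simp at h3
  rcases hgA with rfl | rfl
  · rcases hgB with rfl | rfl
    · exact absurd rfl hABne
    · exact ⟨dA, dB, Or.inl ⟨hA, hB⟩⟩
  · rcases hgB with rfl | rfl
    · exact ⟨dA, dB, Or.inr ⟨hA, hB⟩⟩
    · exact absurd rfl hABne

end SPLIT

/-- Main field theorem: if `{g₁, g₂}` is a minimal Gröbner basis (top ordering) of the row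
space of `[[x^(N+1),0],[-(S_N x^N + ⋯ + S_1 x),1]]` with `g₁₂(0) = 0`, `g₂₂(0) ≠ 0`,
`L̃ = deg g₁` and `L = deg g₂`, then `L` is the complexity of the sequence, `g₂₂` is a
shortest feedback polynomial, and the shortest feedback polynomials are exactly the
`a g₂₂ + b g₁₂` with `a ≠ 0` and `deg b ≤ L − L̃`. -/
theorem field_shortest_feedback_param {F : Type*} [Field F] (S : ℕ → F) (N : ℕ)
    (g₁ g₂ : Fin 2 → Polynomial F) (hne : g₁ ≠ g₂)
    (hGB : IsMinimalGroebner
      (Submodule.span (Polynomial F)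
        ({![X ^ (N + 1), 0],
          ![-(∑ i ∈ Finset.range N, C (S (i + 1)) * X ^ (i + 1)), 1]} :
          Set (Fin 2 → Polynomial F)))
      ({g₁, g₂} : Finset (Fin 2 → Polynomial F)))
    (h12 : (g₁ 1).coeff 0 = 0) (h22 : (g₂ 1).coeff 0 ≠ 0)
    (Lt L : ℕ) (hLt : Lt = vdeg g₁) (hL : L = vdeg g₂) :
    IsFeedback S N L (g₂ 1) ∧
    (∀ L' l, IsFeedback S N L' l → L ≤ L') ∧
    (∀ l : Polynomial F, IsFeedback S N L l ↔
      ∃ (a : F) (b : Polynomial F), a ≠ 0 ∧ (b = 0 ∨ b.natDegree + Lt ≤ L) ∧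
        l = C a * g₂ 1 + b * g₁ 1) := by
  have hM : Submodule.span (Polynomial F)
      ({![X ^ (N + 1), 0],
        ![-(∑ i ∈ Finset.range N, C (S (i + 1)) * X ^ (i + 1)), 1]} :
        Set (Fin 2 → Polynomial F)) = MP S N := rfl
  obtain ⟨⟨hsub, hlt⟩, _⟩ := hGB
  rw [hM] at hsub hlt
  have hcoe : (({g₁, g₂} : Finset (Fin 2 → Polynomial F)) : Set (Fin 2 → Polynomial F)) =
      ({g₁, g₂} : Set (Fin 2 → Polynomial F)) := by simp
  rw [hcoe] at hsub
  have hlt' : Submodule.span (Polynomial F) ({vlt g₁, vlt g₂} : Set (Fin 2 → Polynomial F)) =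
      ltSubmodule ((MP S N : Set (Fin 2 → Polynomial F))) := by
    rw [← hlt]
    rw [ltSubmodule, hcoe, Set.image_pair]
  have hspan12 : ∀ v ∈ MP S N, v ≠ 0 →
      vlt v ∈ Submodule.span (Polynomial F) ({vlt g₁, vlt g₂} : Set (Fin 2 → Polynomial F)) := by
    intro v hv _
    rw [hlt']
    exact Submodule.subset_span ⟨v, hv, rfl⟩
  have hg₁M : g₁ ∈ MP S N := hsub (Or.inl rfl)
  have hg₂M : g₂ ∈ MP S N := hsub (Or.inr rfl)
  obtain ⟨d, d', hcase⟩ := pos_split hsub hlt'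
  rcases hcase with ⟨hA1, hA2⟩ | ⟨hB1, hB2⟩
  · -- g₁ has leading position 0, g₂ leading position 1
    have hLt' : Lt = d := by rw [hLt, vdeg_eq hA1]
    have hL' : L = d' := by rw [hL, vdeg_eq hA2]
    subst hLt' hL'
    exact caseA hA1 hA2 hg₁M hg₂M hspan12 h12 h22
  · -- g₂ has leading position 0, g₁ leading position 1
    have hLt' : Lt = d' := by rw [hLt, vdeg_eq hB2]
    have hL' : L = d := by rw [hL, vdeg_eq hB1]
    subst hLt' hL'
    have hspan21 : ∀ v ∈ MP S N, v ≠ 0 →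
        vlt v ∈ Submodule.span (Polynomial F)
          ({vlt g₂, vlt g₁} : Set (Fin 2 → Polynomial F)) := by
      intro v hv hv0
      rw [Set.pair_comm]
      exact hspan12 v hv hv0
    exact caseB hB1 hB2 hg₂M hg₁M hspan21 h12 h22
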